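/- Let W' be a finite index set, and for each i ∈ W' let Mᵢ be a finite nonempty subset of an index set [z] such that Mᵢ = {i} when i ∈ [z] ∩ W'. Suppose given reals A₁ⱼ, A₂ⱼ for j ∈ [z] with (A₁ⱼ, A₂ⱼ) = (0,0) exactly when j ∉ W', and reals Bⱼ ≥ 0. Then ⋂_{i ∈ [z] ∩ W'} Dᵢ ⊆ ⋂_{k ∈ W'} D_k, where for i ∈ [z] ∩ W', Dᵢ = {(σ₁,σ₂) : A₁ᵢσ₁ + A₂ᵢσ₂ > 1 − Bᵢ}, and for general k ∈ W', D_k = {(σ₁,σ₂) : ∑_{j ∈ M_k}(A₁ⱼσ₁ + A₂ⱼσ₂) > 1 − ∑_{j ∈ M_k} Bⱼ, and A₁ⱼσ₁ + A₂ⱼσ₂ > −Bⱼ for all j ∈ M_k ∩ W'}. -/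
import Mathlib


open Finset

/-- The intersection of the ray-domains `Dᵢ`, `i ∈ [z] ∩ W'`, is contained in the
intersection of all domains `D_k`, `k ∈ W'`. Here `Z` plays the role of `[z]`,
`M k ⊆ Z` are the generating rays of the cone `R_k`, `M i = {i}` for
`i ∈ Z ∩ W'`, `(A₁ⱼ, A₂ⱼ) = (0,0)` exactly when `j ∉ W'`, and `Bⱼ ≥ 0`. -/
theorem inter_Di_subset_inter_Dk
    {ι : Type*} [DecidableEq ι] (Z W' : Finset ι)
    (M : ι → Finset ι)
    (hMZ : ∀ k ∈ W', M k ⊆ Z)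
    (hMne : ∀ k ∈ W', (M k ∩ W').Nonempty)
    (hMi : ∀ i ∈ Z ∩ W', M i = {i})
    (A₁ A₂ B : ι → ℝ)
    (hA : ∀ j ∈ Z, ((A₁ j, A₂ j) = (0, 0) ↔ j ∉ W'))
    (hB : ∀ j, 0 ≤ B j)
    (σ₁ σ₂ : ℝ)
    (hσ : ∀ i ∈ Z ∩ W', A₁ i * σ₁ + A₂ i * σ₂ > 1 - B i) :
    ∀ k ∈ W',
      ((∑ j ∈ M k, (A₁ j * σ₁ + A₂ j * σ₂)) > 1 - ∑ j ∈ M k, B j) ∧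
      (∀ j ∈ M k ∩ W', A₁ j * σ₁ + A₂ j * σ₂ > -(B j)) := by
  intro k hk
  -- every j ∈ M k ∩ W' lies in Z ∩ W'
  have hmem : ∀ j ∈ M k ∩ W', j ∈ Z ∩ W' := by
    intro j hj
    rw [mem_inter] at hj ⊢
    exact ⟨hMZ k hk hj.1, hj.2⟩
  have h2 : ∀ j ∈ M k ∩ W', A₁ j * σ₁ + A₂ j * σ₂ > -(B j) := by
    intro j hj
    have := hσ j (hmem j hj)
    linarith
  refine ⟨?_, h2⟩
  -- terms vanish outside W'
  have hsum : ∑ j ∈ M k, (A₁ j * σ₁ + A₂ j * σ₂)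
      = ∑ j ∈ M k ∩ W', (A₁ j * σ₁ + A₂ j * σ₂) := by
    rw [← Finset.sum_inter_add_sum_sdiff (M k) W'
      (fun j => A₁ j * σ₁ + A₂ j * σ₂)]
    have : ∑ j ∈ M k \ W', (A₁ j * σ₁ + A₂ j * σ₂) = 0 := by
      apply Finset.sum_eq_zero
      intro j hj
      rw [mem_sdiff] at hj
      have hz : j ∈ Z := hMZ k hk hj.1
      have h0 := (hA j hz).mpr hj.2
      have h01 : A₁ j = 0 := by simpa using congrArg Prod.fst h0
      have h02 : A₂ j = 0 := by simpa using congrArg Prod.snd h0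
      rw [h01, h02]; ring
    rw [this, add_zero]
  obtain ⟨j₀, hj₀⟩ := hMne k hk
  -- lower bound function
  have key : ∑ j ∈ M k ∩ W', ((if j = j₀ then 1 else 0) - B j)
      < ∑ j ∈ M k ∩ W', (A₁ j * σ₁ + A₂ j * σ₂) := by
    apply Finset.sum_lt_sum_of_nonempty ⟨j₀, hj₀⟩
    intro j hj
    by_cases h : j = j₀
    · subst h
      simp only [if_pos rfl, if_true]
      have := hσ j (hmem j hj)
      linarith
    · simp only [if_neg h]
      have := h2 j hj
      linarith
  have hbsum : ∑ j ∈ M k ∩ W', ((if j = j₀ then 1 else 0) - B j)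
      = 1 - ∑ j ∈ M k ∩ W', B j := by
    rw [Finset.sum_sub_distrib, Finset.sum_ite_eq' (M k ∩ W') j₀ (fun _ => (1:ℝ)),
      if_pos hj₀]
  have hBsub : ∑ j ∈ M k ∩ W', B j ≤ ∑ j ∈ M k, B j :=
    Finset.sum_le_sum_of_subset_of_nonneg (Finset.inter_subset_left)
      (fun j _ _ => hB j)
  rw [hsum]
  rw [hbsum] at key
  linarith
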